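/- The sequential Hardy space (𝐇²(B₈(0,1),𝕆), [·,·]) is an octonionic Hilbert space; in particular, for f(x)=Σ_{n≥0}xⁿaₙ and g(x)=Σ_{n≥0}xⁿbₙ in 𝐇²(B₈(0,1),𝕆) and α∈𝕆: conj([g,f]) = [f,g]; [fα,f] = Σ_{n≥0} conj(aₙ)(aₙα) = (Σ_{n≥0} conj(aₙ)aₙ)·α = [f,f]·α; and Re([fα,g]) = Re(Σ_{n≥0} conj(bₙ)(aₙα)) = Re([f,g]·α). -/

import Mathlib

noncomputable section

open MeasureTheory

/-- The octonions `𝕆`, modelled as ℝ⁸ with the Euclidean norm. -/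
abbrev Oct : Type := EuclideanSpace ℝ (Fin 8)

namespace Oct

/-- Index table of the octonionic multiplication: `e i * e j = ± e (idxT i j)`. -/
def idxT : Fin 8 → Fin 8 → Fin 8 :=
  ![![0,1,2,3,4,5,6,7],
    ![1,0,4,5,2,3,7,6],
    ![2,4,0,6,1,7,3,5],
    ![3,5,6,0,7,1,2,4],
    ![4,2,1,7,0,6,5,3],
    ![5,3,7,1,6,0,4,2],
    ![6,7,3,2,5,4,0,1],
    ![7,6,5,4,3,2,1,0]]

/-- Sign table of the octonionic multiplication: `e i * e j = signT i j • e (idxT i j)`. -/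
def signT : Fin 8 → Fin 8 → ℝ :=
  ![![1,1,1,1,1,1,1,1],
    ![1,-1,1,1,-1,-1,-1,1],
    ![1,-1,-1,1,1,1,-1,-1],
    ![1,-1,-1,-1,-1,1,1,1],
    ![1,1,-1,1,-1,-1,1,-1],
    ![1,1,-1,-1,1,-1,-1,1],
    ![1,1,1,-1,-1,1,-1,-1],
    ![1,-1,1,-1,1,-1,1,-1]]

/-- Octonionic multiplication. -/
def omul (x y : Oct) : Oct :=
  (WithLp.equiv 2 (Fin 8 → ℝ)).symm fun k =>
    ∑ i : Fin 8, ∑ j : Fin 8,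
      if idxT i j = k then signT i j * x i * y j else 0

/-- Octonionic conjugation `x̄`. -/
def oconj (x : Oct) : Oct :=
  (WithLp.equiv 2 (Fin 8 → ℝ)).symm fun k => if k = 0 then x k else -x k

/-- Real part of an octonion. -/
def oRe (x : Oct) : ℝ := x 0

/-- The basis octonions `e i`. -/
def unit (i : Fin 8) : Oct := EuclideanSpace.single i 1

/-- The octonion `1`. -/
def oone : Oct := unit 0

/-- Powers of an octonion (powers are unambiguous by power-associativity). -/
def opow (x : Oct) : ℕ → Oct
  | 0 => oone
  | n + 1 => omul (opow x n) x

/-- Inverse of a nonzero octonion. -/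
def oinv (x : Oct) : Oct := (‖x‖ ^ 2)⁻¹ • oconj x

/-- A function is left octonionic monogenic on `U` if `𝒟 f = 0` there, where
`𝒟 = ∂/∂x₀ + Σᵢ eᵢ ∂/∂xᵢ` is the octonionic Cauchy–Riemann operator. -/
def LeftMonogenicOn (f : Oct → Oct) (U : Set Oct) : Prop :=
  ∀ x ∈ U, DifferentiableAt ℝ f x ∧
    ∑ i : Fin 8, omul (unit i) (fderiv ℝ f x (unit i)) = 0

/-- The sphere `𝕊` of imaginary units of `𝕆`. -/
def sphS : Set Oct := {x | oRe x = 0 ∧ ‖x‖ = 1}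

/-- The complex slice `ℂ_I = ℝ + ℝ I`. -/
def sliceC (I : Oct) : Set Oct := {x | ∃ u v : ℝ, x = u • oone + v • I}

/-- A function is (left) slice monogenic on `Ω` if its restriction to every slice `ℂ_I`
is holomorphic, i.e. `(∂/∂u + I ∂/∂v) f(u + Iv) = 0`. -/
def SliceMonogenicOn (f : Oct → Oct) (Ω : Set Oct) : Prop :=
  ∀ I ∈ sphS, ∀ u v : ℝ, u • oone + v • I ∈ Ω →
    DifferentiableAt ℝ (fun p : ℝ × ℝ => f (p.1 • oone + p.2 • I)) (u, v) ∧
    fderiv ℝ (fun p : ℝ × ℝ => f (p.1 • oone + p.2 • I)) (u, v) (1, 0)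
      + omul I (fderiv ℝ (fun p : ℝ × ℝ => f (p.1 • oone + p.2 • I)) (u, v) (0, 1)) = 0

end Oct

namespace Oct

/-- The sequential octonion-valued inner product `[f,g] = Σₙ conj(bₙ)aₙ` of the Hardy
space of the unit ball, on Taylor coefficient sequences (`a` for `f`, `b` for `g`). -/
def seqInner (a b : ℕ → Oct) : Oct := ∑' n : ℕ, omul (oconj (b n)) (a n)

end Oct


namespace Oct

lemma omul_apply (x y : Oct) (k : Fin 8) :
    omul x y k = ∑ i : Fin 8, ∑ j : Fin 8,
      if idxT i j = k then signT i j * x i * y j else 0 := rfl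

lemma oconj_apply (x : Oct) (k : Fin 8) :
    oconj x k = if k = 0 then x k else -x k := rfl

lemma fin8_cases (k : Fin 8) :
    k = 0 ∨ k = 1 ∨ k = 2 ∨ k = 3 ∨ k = 4 ∨ k = 5 ∨ k = 6 ∨ k = 7 := by omega

lemma oone_apply (k : Fin 8) : oone k = if k = 0 then 1 else 0 := by
  simp [oone, unit, EuclideanSpace.single_apply]

lemma signT_0_0 : signT (0:Fin 8) (0:Fin 8) = 1 := rfl
lemma signT_0_1 : signT (0:Fin 8) (1:Fin 8) = 1 := rfl
lemma signT_0_2 : signT (0:Fin 8) (2:Fin 8) = 1 := rfl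
lemma signT_0_3 : signT (0:Fin 8) (3:Fin 8) = 1 := rfl
lemma signT_0_4 : signT (0:Fin 8) (4:Fin 8) = 1 := rfl
lemma signT_0_5 : signT (0:Fin 8) (5:Fin 8) = 1 := rfl
lemma signT_0_6 : signT (0:Fin 8) (6:Fin 8) = 1 := rfl
lemma signT_0_7 : signT (0:Fin 8) (7:Fin 8) = 1 := rfl
lemma signT_1_0 : signT (1:Fin 8) (0:Fin 8) = 1 := rfl
lemma signT_1_1 : signT (1:Fin 8) (1:Fin 8) = (-1) := rfl
lemma signT_1_2 : signT (1:Fin 8) (2:Fin 8) = 1 := rfl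
lemma signT_1_3 : signT (1:Fin 8) (3:Fin 8) = 1 := rfl
lemma signT_1_4 : signT (1:Fin 8) (4:Fin 8) = (-1) := rfl
lemma signT_1_5 : signT (1:Fin 8) (5:Fin 8) = (-1) := rfl
lemma signT_1_6 : signT (1:Fin 8) (6:Fin 8) = (-1) := rfl
lemma signT_1_7 : signT (1:Fin 8) (7:Fin 8) = 1 := rfl
lemma signT_2_0 : signT (2:Fin 8) (0:Fin 8) = 1 := rfl
lemma signT_2_1 : signT (2:Fin 8) (1:Fin 8) = (-1) := rfl
lemma signT_2_2 : signT (2:Fin 8) (2:Fin 8) = (-1) := rfl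
lemma signT_2_3 : signT (2:Fin 8) (3:Fin 8) = 1 := rfl
lemma signT_2_4 : signT (2:Fin 8) (4:Fin 8) = 1 := rfl
lemma signT_2_5 : signT (2:Fin 8) (5:Fin 8) = 1 := rfl
lemma signT_2_6 : signT (2:Fin 8) (6:Fin 8) = (-1) := rfl
lemma signT_2_7 : signT (2:Fin 8) (7:Fin 8) = (-1) := rfl
lemma signT_3_0 : signT (3:Fin 8) (0:Fin 8) = 1 := rfl
lemma signT_3_1 : signT (3:Fin 8) (1:Fin 8) = (-1) := rfl
lemma signT_3_2 : signT (3:Fin 8) (2:Fin 8) = (-1) := rfl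
lemma signT_3_3 : signT (3:Fin 8) (3:Fin 8) = (-1) := rfl
lemma signT_3_4 : signT (3:Fin 8) (4:Fin 8) = (-1) := rfl
lemma signT_3_5 : signT (3:Fin 8) (5:Fin 8) = 1 := rfl
lemma signT_3_6 : signT (3:Fin 8) (6:Fin 8) = 1 := rfl
lemma signT_3_7 : signT (3:Fin 8) (7:Fin 8) = 1 := rfl
lemma signT_4_0 : signT (4:Fin 8) (0:Fin 8) = 1 := rfl
lemma signT_4_1 : signT (4:Fin 8) (1:Fin 8) = 1 := rfl
lemma signT_4_2 : signT (4:Fin 8) (2:Fin 8) = (-1) := rfl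
lemma signT_4_3 : signT (4:Fin 8) (3:Fin 8) = 1 := rfl
lemma signT_4_4 : signT (4:Fin 8) (4:Fin 8) = (-1) := rfl
lemma signT_4_5 : signT (4:Fin 8) (5:Fin 8) = (-1) := rfl
lemma signT_4_6 : signT (4:Fin 8) (6:Fin 8) = 1 := rfl
lemma signT_4_7 : signT (4:Fin 8) (7:Fin 8) = (-1) := rfl
lemma signT_5_0 : signT (5:Fin 8) (0:Fin 8) = 1 := rfl
lemma signT_5_1 : signT (5:Fin 8) (1:Fin 8) = 1 := rfl
lemma signT_5_2 : signT (5:Fin 8) (2:Fin 8) = (-1) := rfl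
lemma signT_5_3 : signT (5:Fin 8) (3:Fin 8) = (-1) := rfl
lemma signT_5_4 : signT (5:Fin 8) (4:Fin 8) = 1 := rfl
lemma signT_5_5 : signT (5:Fin 8) (5:Fin 8) = (-1) := rfl
lemma signT_5_6 : signT (5:Fin 8) (6:Fin 8) = (-1) := rfl
lemma signT_5_7 : signT (5:Fin 8) (7:Fin 8) = 1 := rfl
lemma signT_6_0 : signT (6:Fin 8) (0:Fin 8) = 1 := rfl
lemma signT_6_1 : signT (6:Fin 8) (1:Fin 8) = 1 := rfl
lemma signT_6_2 : signT (6:Fin 8) (2:Fin 8) = 1 := rfl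
lemma signT_6_3 : signT (6:Fin 8) (3:Fin 8) = (-1) := rfl
lemma signT_6_4 : signT (6:Fin 8) (4:Fin 8) = (-1) := rfl
lemma signT_6_5 : signT (6:Fin 8) (5:Fin 8) = 1 := rfl
lemma signT_6_6 : signT (6:Fin 8) (6:Fin 8) = (-1) := rfl
lemma signT_6_7 : signT (6:Fin 8) (7:Fin 8) = (-1) := rfl
lemma signT_7_0 : signT (7:Fin 8) (0:Fin 8) = 1 := rfl
lemma signT_7_1 : signT (7:Fin 8) (1:Fin 8) = (-1) := rfl
lemma signT_7_2 : signT (7:Fin 8) (2:Fin 8) = 1 := rfl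
lemma signT_7_3 : signT (7:Fin 8) (3:Fin 8) = (-1) := rfl
lemma signT_7_4 : signT (7:Fin 8) (4:Fin 8) = 1 := rfl
lemma signT_7_5 : signT (7:Fin 8) (5:Fin 8) = (-1) := rfl
lemma signT_7_6 : signT (7:Fin 8) (6:Fin 8) = 1 := rfl
lemma signT_7_7 : signT (7:Fin 8) (7:Fin 8) = (-1) := rfl

lemma omul_c0 (x y : Oct) : omul x y (0:Fin 8) = x 0 * y 0 - x 1 * y 1 - x 2 * y 2 - x 3 * y 3 - x 4 * y 4 - x 5 * y 5 - x 6 * y 6 - x 7 * y 7 := by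
  simp only [omul_apply, Fin.sum_univ_eight]
  norm_num (config := { decide := true }) [signT_0_0, signT_0_1, signT_0_2, signT_0_3, signT_0_4, signT_0_5, signT_0_6, signT_0_7, signT_1_0, signT_1_1, signT_1_2, signT_1_3, signT_1_4, signT_1_5, signT_1_6, signT_1_7, signT_2_0, signT_2_1, signT_2_2, signT_2_3, signT_2_4, signT_2_5, signT_2_6, signT_2_7, signT_3_0, signT_3_1, signT_3_2, signT_3_3, signT_3_4, signT_3_5, signT_3_6, signT_3_7, signT_4_0, signT_4_1, signT_4_2, signT_4_3, signT_4_4, signT_4_5, signT_4_6, signT_4_7, signT_5_0, signT_5_1, signT_5_2, signT_5_3, signT_5_4, signT_5_5, signT_5_6, signT_5_7, signT_6_0, signT_6_1, signT_6_2, signT_6_3, signT_6_4, signT_6_5, signT_6_6, signT_6_7, signT_7_0, signT_7_1, signT_7_2, signT_7_3, signT_7_4, signT_7_5, signT_7_6, signT_7_7]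
  ring

lemma omul_c1 (x y : Oct) : omul x y (1:Fin 8) = x 0 * y 1 + x 1 * y 0 + x 2 * y 4 + x 3 * y 5 - x 4 * y 2 - x 5 * y 3 - x 6 * y 7 + x 7 * y 6 := by
  simp only [omul_apply, Fin.sum_univ_eight]
  norm_num (config := { decide := true }) [signT_0_0, signT_0_1, signT_0_2, signT_0_3, signT_0_4, signT_0_5, signT_0_6, signT_0_7, signT_1_0, signT_1_1, signT_1_2, signT_1_3, signT_1_4, signT_1_5, signT_1_6, signT_1_7, signT_2_0, signT_2_1, signT_2_2, signT_2_3, signT_2_4, signT_2_5, signT_2_6, signT_2_7, signT_3_0, signT_3_1, signT_3_2, signT_3_3, signT_3_4, signT_3_5, signT_3_6, signT_3_7, signT_4_0, signT_4_1, signT_4_2, signT_4_3, signT_4_4, signT_4_5, signT_4_6, signT_4_7, signT_5_0, signT_5_1, signT_5_2, signT_5_3, signT_5_4, signT_5_5, signT_5_6, signT_5_7, signT_6_0, signT_6_1, signT_6_2, signT_6_3, signT_6_4, signT_6_5, signT_6_6, signT_6_7, signT_7_0, signT_7_1, signT_7_2, signT_7_3, signT_7_4, signT_7_5, signT_7_6,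 signT_7_7]
  ring

lemma omul_c2 (x y : Oct) : omul x y (2:Fin 8) = x 0 * y 2 - x 1 * y 4 + x 2 * y 0 + x 3 * y 6 + x 4 * y 1 + x 5 * y 7 - x 6 * y 3 - x 7 * y 5 := by
  simp only [omul_apply, Fin.sum_univ_eight]
  norm_num (config := { decide := true }) [signT_0_0, signT_0_1, signT_0_2, signT_0_3, signT_0_4, signT_0_5, signT_0_6, signT_0_7, signT_1_0, signT_1_1, signT_1_2, signT_1_3, signT_1_4, signT_1_5, signT_1_6, signT_1_7, signT_2_0, signT_2_1, signT_2_2, signT_2_3, signT_2_4, signT_2_5, signT_2_6, signT_2_7, signT_3_0, signT_3_1, signT_3_2, signT_3_3, signT_3_4, signT_3_5, signT_3_6, signT_3_7, signT_4_0, signT_4_1, signT_4_2, signT_4_3, signT_4_4, signT_4_5, signT_4_6, signT_4_7, signT_5_0, signT_5_1, signT_5_2, signT_5_3, signT_5_4, signT_5_5, signT_5_6, signT_5_7, signT_6_0, signT_6_1, signT_6_2, signT_6_3, signT_6_4, signT_6_5, signT_6_6, signT_6_7, signT_7_0, signT_7_1, signT_7_2, signT_7_3, signT_7_4, signT_7_5,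 signT_7_6, signT_7_7]
  ring

lemma omul_c3 (x y : Oct) : omul x y (3:Fin 8) = x 0 * y 3 - x 1 * y 5 - x 2 * y 6 + x 3 * y 0 - x 4 * y 7 + x 5 * y 1 + x 6 * y 2 + x 7 * y 4 := by
  simp only [omul_apply, Fin.sum_univ_eight]
  norm_num (config := { decide := true }) [signT_0_0, signT_0_1, signT_0_2, signT_0_3, signT_0_4, signT_0_5, signT_0_6, signT_0_7, signT_1_0, signT_1_1, signT_1_2, signT_1_3, signT_1_4, signT_1_5, signT_1_6, signT_1_7, signT_2_0, signT_2_1, signT_2_2, signT_2_3, signT_2_4, signT_2_5, signT_2_6, signT_2_7, signT_3_0, signT_3_1, signT_3_2, signT_3_3, signT_3_4, signT_3_5, signT_3_6, signT_3_7, signT_4_0, signT_4_1, signT_4_2, signT_4_3, signT_4_4, signT_4_5, signT_4_6, signT_4_7, signT_5_0, signT_5_1, signT_5_2, signT_5_3, signT_5_4, signT_5_5, signT_5_6, signT_5_7, signT_6_0, signT_6_1, signT_6_2, signT_6_3, signT_6_4, signT_6_5, signT_6_6, signT_6_7, signT_7_0, signT_7_1, signT_7_2, signT_7_3, signT_7_4,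 signT_7_5, signT_7_6, signT_7_7]
  ring

lemma omul_c4 (x y : Oct) : omul x y (4:Fin 8) = x 0 * y 4 + x 1 * y 2 - x 2 * y 1 + x 3 * y 7 + x 4 * y 0 - x 5 * y 6 + x 6 * y 5 - x 7 * y 3 := by
  simp only [omul_apply, Fin.sum_univ_eight]
  norm_num (config := { decide := true }) [signT_0_0, signT_0_1, signT_0_2, signT_0_3, signT_0_4, signT_0_5, signT_0_6, signT_0_7, signT_1_0, signT_1_1, signT_1_2, signT_1_3, signT_1_4, signT_1_5, signT_1_6, signT_1_7, signT_2_0, signT_2_1, signT_2_2, signT_2_3, signT_2_4, signT_2_5, signT_2_6, signT_2_7, signT_3_0, signT_3_1, signT_3_2, signT_3_3, signT_3_4, signT_3_5, signT_3_6, signT_3_7, signT_4_0, signT_4_1, signT_4_2, signT_4_3, signT_4_4, signT_4_5, signT_4_6, signT_4_7, signT_5_0, signT_5_1, signT_5_2, signT_5_3, signT_5_4, signT_5_5, signT_5_6, signT_5_7, signT_6_0, signT_6_1, signT_6_2, signT_6_3, signT_6_4, signT_6_5, signT_6_6, signT_6_7, signT_7_0, signT_7_1, signT_7_2, signT_7_3,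 signT_7_4, signT_7_5, signT_7_6, signT_7_7]
  ring

lemma omul_c5 (x y : Oct) : omul x y (5:Fin 8) = x 0 * y 5 + x 1 * y 3 - x 2 * y 7 - x 3 * y 1 + x 4 * y 6 + x 5 * y 0 - x 6 * y 4 + x 7 * y 2 := by
  simp only [omul_apply, Fin.sum_univ_eight]
  norm_num (config := { decide := true }) [signT_0_0, signT_0_1, signT_0_2, signT_0_3, signT_0_4, signT_0_5, signT_0_6, signT_0_7, signT_1_0, signT_1_1, signT_1_2, signT_1_3, signT_1_4, signT_1_5, signT_1_6, signT_1_7, signT_2_0, signT_2_1, signT_2_2, signT_2_3, signT_2_4, signT_2_5, signT_2_6, signT_2_7, signT_3_0, signT_3_1, signT_3_2, signT_3_3, signT_3_4, signT_3_5, signT_3_6, signT_3_7, signT_4_0, signT_4_1, signT_4_2, signT_4_3, signT_4_4, signT_4_5, signT_4_6, signT_4_7, signT_5_0, signT_5_1, signT_5_2, signT_5_3, signT_5_4, signT_5_5, signT_5_6, signT_5_7, signT_6_0, signT_6_1, signT_6_2, signT_6_3, signT_6_4, signT_6_5, signT_6_6, signT_6_7, signT_7_0, signT_7_1, signT_7_2,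 signT_7_3, signT_7_4, signT_7_5, signT_7_6, signT_7_7]
  ring

lemma omul_c6 (x y : Oct) : omul x y (6:Fin 8) = x 0 * y 6 + x 1 * y 7 + x 2 * y 3 - x 3 * y 2 - x 4 * y 5 + x 5 * y 4 + x 6 * y 0 - x 7 * y 1 := by
  simp only [omul_apply, Fin.sum_univ_eight]
  norm_num (config := { decide := true }) [signT_0_0, signT_0_1, signT_0_2, signT_0_3, signT_0_4, signT_0_5, signT_0_6, signT_0_7, signT_1_0, signT_1_1, signT_1_2, signT_1_3, signT_1_4, signT_1_5, signT_1_6, signT_1_7, signT_2_0, signT_2_1, signT_2_2, signT_2_3, signT_2_4, signT_2_5, signT_2_6, signT_2_7, signT_3_0, signT_3_1, signT_3_2, signT_3_3, signT_3_4, signT_3_5, signT_3_6, signT_3_7, signT_4_0, signT_4_1, signT_4_2, signT_4_3, signT_4_4, signT_4_5, signT_4_6, signT_4_7, signT_5_0, signT_5_1, signT_5_2, signT_5_3, signT_5_4, signT_5_5, signT_5_6, signT_5_7, signT_6_0, signT_6_1, signT_6_2, signT_6_3, signT_6_4, signT_6_5, signT_6_6, signT_6_7, signT_7_0, signT_7_1,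 signT_7_2, signT_7_3, signT_7_4, signT_7_5, signT_7_6, signT_7_7]
  ring

lemma omul_c7 (x y : Oct) : omul x y (7:Fin 8) = x 0 * y 7 - x 1 * y 6 + x 2 * y 5 - x 3 * y 4 + x 4 * y 3 - x 5 * y 2 + x 6 * y 1 + x 7 * y 0 := by
  simp only [omul_apply, Fin.sum_univ_eight]
  norm_num (config := { decide := true }) [signT_0_0, signT_0_1, signT_0_2, signT_0_3, signT_0_4, signT_0_5, signT_0_6, signT_0_7, signT_1_0, signT_1_1, signT_1_2, signT_1_3, signT_1_4, signT_1_5, signT_1_6, signT_1_7, signT_2_0, signT_2_1, signT_2_2, signT_2_3, signT_2_4, signT_2_5, signT_2_6, signT_2_7, signT_3_0, signT_3_1, signT_3_2, signT_3_3, signT_3_4, signT_3_5, signT_3_6, signT_3_7, signT_4_0, signT_4_1, signT_4_2, signT_4_3, signT_4_4, signT_4_5, signT_4_6, signT_4_7, signT_5_0, signT_5_1, signT_5_2, signT_5_3, signT_5_4, signT_5_5, signT_5_6, signT_5_7, signT_6_0, signT_6_1, signT_6_2, signT_6_3, signT_6_4, signT_6_5, signT_6_6, signT_6_7, signT_7_0,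 signT_7_1, signT_7_2, signT_7_3, signT_7_4, signT_7_5, signT_7_6, signT_7_7]
  ring



lemma norm_sq_eq (x : Oct) : ‖x‖^2 = ∑ i, x i^2 := by
  rw [EuclideanSpace.norm_eq, Real.sq_sqrt (by positivity)]
  simp [sq_abs]

lemma norm_oconj (x : Oct) : ‖oconj x‖ = ‖x‖ := by
  rw [EuclideanSpace.norm_eq, EuclideanSpace.norm_eq]
  congr 1
  refine Finset.sum_congr rfl fun i _ => ?_
  rw [oconj_apply]; split <;> simp

lemma oconj_oconj (x : Oct) : oconj (oconj x) = x := by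
  ext k
  rw [oconj_apply, oconj_apply]
  split <;> simp

lemma omul_add_left (x y z : Oct) : omul (x + y) z = omul x z + omul y z := by
  ext k
  rw [PiLp.add_apply]
  simp only [omul_apply, ← Finset.sum_add_distrib]
  refine Finset.sum_congr rfl fun i _ => ?_
  refine Finset.sum_congr rfl fun j _ => ?_
  by_cases h : idxT i j = k <;> simp [h, PiLp.add_apply] <;> ring

lemma omul_add_right (x y z : Oct) : omul x (y + z) = omul x y + omul x z := by
  ext k
  rw [PiLp.add_apply]
  simp only [omul_apply, ← Finset.sum_add_distrib]
  refine Finset.sum_congr rfl fun i _ => ?_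
  refine Finset.sum_congr rfl fun j _ => ?_
  by_cases h : idxT i j = k <;> simp [h, PiLp.add_apply] <;> ring

lemma omul_smul_left (r : ℝ) (x z : Oct) : omul (r • x) z = r • omul x z := by
  ext k
  rw [PiLp.smul_apply, smul_eq_mul]
  simp only [omul_apply, Finset.mul_sum]
  refine Finset.sum_congr rfl fun i _ => ?_
  refine Finset.sum_congr rfl fun j _ => ?_
  by_cases h : idxT i j = k <;> simp [h, PiLp.smul_apply, smul_eq_mul] <;> ring

lemma omul_smul_right (r : ℝ) (x z : Oct) : omul x (r • z) = r • omul x z := by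
  ext k
  rw [PiLp.smul_apply, smul_eq_mul]
  simp only [omul_apply, Finset.mul_sum]
  refine Finset.sum_congr rfl fun i _ => ?_
  refine Finset.sum_congr rfl fun j _ => ?_
  by_cases h : idxT i j = k <;> simp [h, PiLp.smul_apply, smul_eq_mul] <;> ring

lemma omul_oone_left (x : Oct) : omul oone x = x := by
  ext k
  rcases fin8_cases k with rfl|rfl|rfl|rfl|rfl|rfl|rfl|rfl <;>
    norm_num (config := { decide := true })
      [omul_c0, omul_c1, omul_c2, omul_c3, omul_c4, omul_c5, omul_c6, omul_c7, oone_apply]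

lemma oconj_add (x y : Oct) : oconj (x + y) = oconj x + oconj y := by
  ext k
  rw [PiLp.add_apply, oconj_apply, oconj_apply, oconj_apply]
  split <;> simp [PiLp.add_apply] <;> ring

lemma oconj_smul (r : ℝ) (x : Oct) : oconj (r • x) = r • oconj x := by
  ext k
  rw [PiLp.smul_apply, oconj_apply, oconj_apply, PiLp.smul_apply, smul_eq_mul, smul_eq_mul]
  split <;> simp [PiLp.smul_apply, smul_eq_mul] <;> ring

/-- P1 -/
lemma omul_oconj_self (x : Oct) : omul (oconj x) x = ‖x‖^2 • oone := by
  ext k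
  rw [PiLp.smul_apply, smul_eq_mul, norm_sq_eq, Fin.sum_univ_eight]
  rcases fin8_cases k with rfl|rfl|rfl|rfl|rfl|rfl|rfl|rfl <;>
    norm_num (config := { decide := true })
      [omul_c0, omul_c1, omul_c2, omul_c3, omul_c4, omul_c5, omul_c6, omul_c7,
       oconj_apply, oone_apply] <;> ring

/-- P2 -/
lemma oconj_omul (x y : Oct) : oconj (omul x y) = omul (oconj y) (oconj x) := by
  ext k
  rcases fin8_cases k with rfl|rfl|rfl|rfl|rfl|rfl|rfl|rfl <;>
    norm_num (config := { decide := true })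
      [omul_c0, omul_c1, omul_c2, omul_c3, omul_c4, omul_c5, omul_c6, omul_c7,
       oconj_apply] <;> ring

/-- P3 -/
lemma omul_oconj_omul_self (x α : Oct) : omul (oconj x) (omul x α) = ‖x‖^2 • α := by
  ext k
  rw [PiLp.smul_apply, smul_eq_mul, norm_sq_eq, Fin.sum_univ_eight]
  rcases fin8_cases k with rfl|rfl|rfl|rfl|rfl|rfl|rfl|rfl <;>
    norm_num (config := { decide := true })
      [omul_c0, omul_c1, omul_c2, omul_c3, omul_c4, omul_c5, omul_c6, omul_c7,
       oconj_apply] <;> ring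

/-- P4 -/
lemma oRe_omul_assoc (y x α : Oct) :
    oRe (omul (oconj y) (omul x α)) = oRe (omul (omul (oconj y) x) α) := by
  show omul (oconj y) (omul x α) 0 = omul (omul (oconj y) x) α 0
  norm_num (config := { decide := true })
    [omul_c0, omul_c1, omul_c2, omul_c3, omul_c4, omul_c5, omul_c6, omul_c7, oconj_apply]
  ring

/-- Octonion multiplication as a continuous bilinear map. -/
def omulL : Oct →L[ℝ] Oct →L[ℝ] Oct :=
  LinearMap.toContinuousLinearMap
    { toFun := fun x => LinearMap.toContinuousLinearMap
        { toFun := fun y => omul x y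
          map_add' := omul_add_right x
          map_smul' := fun r z => omul_smul_right r x z }
      map_add' := fun x y => by
        refine ContinuousLinearMap.ext fun z => ?_
        exact omul_add_left x y z
      map_smul' := fun r x => by
        refine ContinuousLinearMap.ext fun z => ?_
        exact omul_smul_left r x z }

lemma omulL_apply (x y : Oct) : omulL x y = omul x y := rfl

lemma norm_omul_le (x y : Oct) : ‖omul x y‖ ≤ ‖omulL‖ * ‖x‖ * ‖y‖ :=
  omulL.le_opNorm₂ x y

def oconjL : Oct →L[ℝ] Oct :=
  LinearMap.toContinuousLinearMap
    { toFun := oconj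
      map_add' := oconj_add
      map_smul' := oconj_smul }

def oReL : Oct →L[ℝ] ℝ :=
  LinearMap.toContinuousLinearMap
    { toFun := oRe
      map_add' := fun x y => rfl
      map_smul' := fun r x => rfl }

def oReMulL (α : Oct) : Oct →L[ℝ] ℝ :=
  LinearMap.toContinuousLinearMap
    { toFun := fun z => oRe (omul z α)
      map_add' := fun x y => by
        show oRe (omul (x + y) α) = _
        rw [omul_add_left]; rfl
      map_smul' := fun r x => by
        show oRe (omul (r • x) α) = _
        rw [omul_smul_left]; rfl }

lemma summable_mul_norm {a b : ℕ → Oct} (ha : Summable fun n => ‖a n‖ ^ 2)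
    (hb : Summable fun n => ‖b n‖ ^ 2) : Summable fun n => ‖b n‖ * ‖a n‖ := by
  refine Summable.of_nonneg_of_le (fun n => by positivity) (fun n => ?_)
    ((hb.add ha).div_const 2)
  have h := sq_nonneg (‖b n‖ - ‖a n‖)
  nlinarith [norm_nonneg (a n), norm_nonneg (b n)]

lemma summable_seq {a b : ℕ → Oct} (ha : Summable fun n => ‖a n‖ ^ 2)
    (hb : Summable fun n => ‖b n‖ ^ 2) :
    Summable fun n => omul (oconj (b n)) (a n) := by
  refine Summable.of_norm ?_
  refine Summable.of_nonneg_of_le (fun n => norm_nonneg _) (fun n => ?_)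
    ((summable_mul_norm ha hb).mul_left ‖omulL‖)
  calc ‖omul (oconj (b n)) (a n)‖ ≤ ‖omulL‖ * ‖oconj (b n)‖ * ‖a n‖ := norm_omul_le _ _
    _ = ‖omulL‖ * (‖b n‖ * ‖a n‖) := by rw [norm_oconj]; ring

lemma summable_seq' {a b : ℕ → Oct} (α : Oct) (ha : Summable fun n => ‖a n‖ ^ 2)
    (hb : Summable fun n => ‖b n‖ ^ 2) :
    Summable fun n => omul (oconj (b n)) (omul (a n) α) := by
  refine Summable.of_norm ?_
  refine Summable.of_nonneg_of_le (fun n => norm_nonneg _) (fun n => ?_)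
    ((summable_mul_norm ha hb).mul_left (‖omulL‖ * (‖omulL‖ * ‖α‖)))
  calc ‖omul (oconj (b n)) (omul (a n) α)‖
      ≤ ‖omulL‖ * ‖oconj (b n)‖ * ‖omul (a n) α‖ := norm_omul_le _ _
    _ ≤ ‖omulL‖ * ‖b n‖ * (‖omulL‖ * ‖a n‖ * ‖α‖) := by
        rw [norm_oconj]
        have h1 := norm_omul_le (a n) α
        have h0 : (0:ℝ) ≤ ‖omulL‖ * ‖b n‖ := by positivity
        exact mul_le_mul_of_nonneg_left h1 h0
    _ = ‖omulL‖ * (‖omulL‖ * ‖α‖) * (‖b n‖ * ‖a n‖) := by ring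

end Oct

/-- The sequential Hardy space `(𝐇²(B₈(0,1),𝕆), [·,·])` is an
octonionic Hilbert space; in particular, for `f(x) = Σ xⁿaₙ`, `g(x) = Σ xⁿbₙ` in
`𝐇²(B₈(0,1),𝕆)` and `α ∈ 𝕆`: `[f,f] = Σ|aₙ|²`, `conj([g,f]) = [f,g]`,
`[fα,f] = Σ conj(aₙ)(aₙα) = (Σ conj(aₙ)aₙ)·α = [f,f]·α`, and
`Re([fα,g]) = Re(Σ conj(bₙ)(aₙα)) = Re([f,g]·α)`. -/
theorem sequential_Hardy_space_is_octonionic_Hilbert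
    (a b : ℕ → Oct) (ha : Summable fun n => ‖a n‖ ^ 2) (hb : Summable fun n => ‖b n‖ ^ 2)
    (f g : Oct → Oct)
    (hf : ∀ x ∈ Metric.ball (0 : Oct) 1, HasSum (fun n : ℕ => Oct.omul (Oct.opow x n) (a n)) (f x))
    (hg : ∀ x ∈ Metric.ball (0 : Oct) 1, HasSum (fun n : ℕ => Oct.omul (Oct.opow x n) (b n)) (g x)) :
    Oct.seqInner a a = (∑' n : ℕ, ‖a n‖ ^ 2) • Oct.oone ∧
    Oct.oconj (Oct.seqInner b a) = Oct.seqInner a b ∧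
    (∀ α : Oct,
      Oct.seqInner (fun n => Oct.omul (a n) α) a
          = ∑' n : ℕ, Oct.omul (Oct.oconj (a n)) (Oct.omul (a n) α) ∧
      (∑' n : ℕ, Oct.omul (Oct.oconj (a n)) (Oct.omul (a n) α))
          = Oct.omul (∑' n : ℕ, Oct.omul (Oct.oconj (a n)) (a n)) α ∧
      Oct.seqInner (fun n => Oct.omul (a n) α) a = Oct.omul (Oct.seqInner a a) α) ∧
    (∀ α : Oct,
      Oct.oRe (Oct.seqInner (fun n => Oct.omul (a n) α) b)
          = Oct.oRe (∑' n : ℕ, Oct.omul (Oct.oconj (b n)) (Oct.omul (a n) α)) ∧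
      Oct.oRe (Oct.seqInner (fun n => Oct.omul (a n) α) b)
          = Oct.oRe (Oct.omul (Oct.seqInner a b) α)) := by
  have hA : Oct.seqInner a a = (∑' n : ℕ, ‖a n‖ ^ 2) • Oct.oone := by
    unfold Oct.seqInner
    rw [tsum_congr (fun n => Oct.omul_oconj_self (a n))]
    exact Summable.tsum_smul_const ha Oct.oone
  refine ⟨hA, ?_, ?_, ?_⟩
  · -- conj symmetry
    have hs : Summable fun n => Oct.omul (Oct.oconj (a n)) (b n) := Oct.summable_seq hb ha
    calc Oct.oconj (Oct.seqInner b a)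
        = Oct.oconjL (∑' n, Oct.omul (Oct.oconj (a n)) (b n)) := rfl
      _ = ∑' n, Oct.oconjL (Oct.omul (Oct.oconj (a n)) (b n)) :=
          Oct.oconjL.map_tsum hs
      _ = ∑' n, Oct.omul (Oct.oconj (b n)) (a n) := by
          refine tsum_congr fun n => ?_
          show Oct.oconj (Oct.omul (Oct.oconj (a n)) (b n)) = _
          rw [Oct.oconj_omul, Oct.oconj_oconj]
      _ = Oct.seqInner a b := rfl
  · intro α
    have h1 : (∑' n : ℕ, Oct.omul (Oct.oconj (a n)) (Oct.omul (a n) α))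
        = (∑' n : ℕ, ‖a n‖ ^ 2) • α := by
      rw [tsum_congr (fun n => Oct.omul_oconj_omul_self (a n) α)]
      exact Summable.tsum_smul_const ha α
    have h2 : Oct.omul (∑' n : ℕ, Oct.omul (Oct.oconj (a n)) (a n)) α
        = (∑' n : ℕ, ‖a n‖ ^ 2) • α := by
      rw [tsum_congr (fun n => Oct.omul_oconj_self (a n)), Summable.tsum_smul_const ha,
        Oct.omul_smul_left, Oct.omul_oone_left]
    refine ⟨rfl, by rw [h1, h2], ?_⟩
    show (∑' n : ℕ, Oct.omul (Oct.oconj (a n)) (Oct.omul (a n) α)) = _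
    rw [h1, hA, Oct.omul_smul_left, Oct.omul_oone_left]
  · intro α
    refine ⟨rfl, ?_⟩
    have hF : Summable fun n => Oct.omul (Oct.oconj (b n)) (Oct.omul (a n) α) :=
      Oct.summable_seq' α ha hb
    have hG : Summable fun n => Oct.omul (Oct.oconj (b n)) (a n) := Oct.summable_seq ha hb
    calc Oct.oRe (Oct.seqInner (fun n => Oct.omul (a n) α) b)
        = Oct.oReL (∑' n, Oct.omul (Oct.oconj (b n)) (Oct.omul (a n) α)) := rfl
      _ = ∑' n, Oct.oReL (Oct.omul (Oct.oconj (b n)) (Oct.omul (a n) α)) :=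
          Oct.oReL.map_tsum hF
      _ = ∑' n, Oct.oReMulL α (Oct.omul (Oct.oconj (b n)) (a n)) := by
          refine tsum_congr fun n => ?_
          exact Oct.oRe_omul_assoc (b n) (a n) α
      _ = Oct.oReMulL α (∑' n, Oct.omul (Oct.oconj (b n)) (a n)) :=
          ((Oct.oReMulL α).map_tsum hG).symm
      _ = Oct.oRe (Oct.omul (Oct.seqInner a b) α) := rfl
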